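/- The word problem for twisted arc components: any arc state component (a linear word in arrows {L,R} and bars T, with moves: cancel adjacent equal arrows, cancel adjacent T·T, swap T past an arrow while flipping it, and delete a T at either end of the word (T0 move)) reduces to an alternating arrow word with no bars; moreover the two alternating words of the same length starting with L or with R are equivalent under these moves (so the reduced form is determined by its length alone). Hence Λ_i and Λ'_i are identified in the twisted setting. -/

import Mathlib

/-- Letters on a twisted arc state component: arrows `L`, `R` and a bar `T`. -/
inductive ALetter : Type
  | L | R | T
deriving DecidableEq

open ALetter

/-- The local rewrite rules: cancel two adjacent equal arrows, cancel two
adjacent bars (T2), and pass a bar over an arrow while flipping it. -/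
inductive ABase : List ALetter → List ALetter → Prop
  | cancelL : ABase [L, L] []
  | cancelR : ABase [R, R] []
  | t2 : ABase [T, T] []
  | passL : ABase [T, L] [R, T]
  | passR : ABase [R, T] [T, L]
  | passL' : ABase [T, R] [L, T]
  | passR' : ABase [L, T] [T, R]

/-- A move on a linear word: a local rule applied in any context, or deletion of
a bar at either end of the word (T0 move). -/
inductive AStep : List ALetter → List ALetter → Prop
  | ctx (x y u v : List ALetter) : ABase u v → AStep (x ++ u ++ y) (x ++ v ++ y)
  | t0Head (w : List ALetter) : AStep (T :: w) w
  | t0Last (w : List ALetter) : AStep (w ++ [T]) w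

/-- Equivalence of twisted arc words generated by the moves. -/
def AEquiv : List ALetter → List ALetter → Prop := Relation.EqvGen AStep

/-- The alternating arrow word of length `n` starting with `L` (if `b = true`)
or with `R` (if `b = false`). -/
def altWord (b : Bool) : ℕ → List ALetter
  | 0 => []
  | n + 1 => (if b then L else R) :: altWord (!b) n

/-- Flip an arrow; a bar is unchanged. -/
def flipL : ALetter → ALetter
  | L => R
  | R => L
  | T => T

/-- A base rewrite in a context (no T0 moves). -/
def BStep (a b : List ALetter) : Prop :=
  ∃ x y u v, ABase u v ∧ a = x ++ u ++ y ∧ b = x ++ v ++ y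

/-- Equivalence generated by contextual base rewrites only. -/
def BEquiv : List ALetter → List ALetter → Prop := Relation.EqvGen BStep

lemma BEquiv.refl (w : List ALetter) : BEquiv w w := Relation.EqvGen.refl w

lemma BEquiv.symm {u v : List ALetter} (h : BEquiv u v) : BEquiv v u :=
  Relation.EqvGen.symm _ _ h

lemma BEquiv.trans {u v w : List ALetter} (h1 : BEquiv u v) (h2 : BEquiv v w) :
    BEquiv u w := Relation.EqvGen.trans _ _ _ h1 h2

lemma BEquiv.base {u v : List ALetter} (h : ABase u v) (x y : List ALetter) :
    BEquiv (x ++ u ++ y) (x ++ v ++ y) :=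
  Relation.EqvGen.rel _ _ ⟨x, y, u, v, h, rfl, rfl⟩

lemma BEquiv.ctx {u v : List ALetter} (h : BEquiv u v) (x y : List ALetter) :
    BEquiv (x ++ u ++ y) (x ++ v ++ y) := by
  induction h with
  | rel a b hab =>
      obtain ⟨p, q, s, t, hb, rfl, rfl⟩ := hab
      exact Relation.EqvGen.rel _ _
        ⟨x ++ p, q ++ y, s, t, hb, by simp [List.append_assoc], by simp [List.append_assoc]⟩
  | refl a => exact BEquiv.refl _
  | symm a b _ ih => exact ih.symm
  | trans a b c _ _ ih1 ih2 => exact ih1.trans ih2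

lemma bToA {u v : List ALetter} (h : BEquiv u v) : AEquiv u v := by
  induction h with
  | rel a b hab =>
      obtain ⟨x, y, s, t, hb, rfl, rfl⟩ := hab
      exact Relation.EqvGen.rel _ _ (AStep.ctx x y s t hb)
  | refl a => exact Relation.EqvGen.refl a
  | symm a b _ ih => exact Relation.EqvGen.symm _ _ ih
  | trans a b c _ _ ih1 ih2 => exact Relation.EqvGen.trans _ _ _ ih1 ih2

lemma AEquiv.trans' {u v w : List ALetter} (h1 : AEquiv u v) (h2 : AEquiv v w) :
    AEquiv u w := Relation.EqvGen.trans _ _ _ h1 h2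

/-- Pass a bar through a bar-free word, flipping every arrow. -/
lemma passLemma : ∀ w : List ALetter, T ∉ w → BEquiv (T :: w) (w.map flipL ++ [T])
  | [], _ => BEquiv.refl _
  | a :: w, h => by
    have ha : a ≠ T := fun hh => h (hh ▸ (List.mem_cons_self : a ∈ a :: w))
    have hb : ABase [T, a] [flipL a, T] := by
      cases a with
      | L => exact ABase.passL
      | R => exact ABase.passL'
      | T => exact absurd rfl ha
    have h1 : BEquiv (T :: a :: w) (flipL a :: T :: w) := by
      simpa using BEquiv.base hb [] w
    have h2 : BEquiv (flipL a :: T :: w) (flipL a :: (w.map flipL ++ [T])) := by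
      simpa using (passLemma w (fun hm => h (List.mem_cons_of_mem _ hm))).ctx [flipL a] []
    have := h1.trans h2
    simpa using this

lemma flipL_ne_T {a : ALetter} (ha : a ≠ T) : flipL a ≠ T := by
  cases a <;> simp_all [flipL]

lemma map_flip_noT {a : List ALetter} (h : T ∉ a) : T ∉ a.map flipL := by
  intro hm
  obtain ⟨x, hx, hfx⟩ := List.mem_map.mp hm
  exact flipL_ne_T (fun hh => h (hh ▸ hx)) hfx

/-- Push all bars to the right end, cancelling pairs. -/
lemma removeT : ∀ w : List ALetter,
    ∃ (a : List ALetter) (k : Bool), T ∉ a ∧ BEquiv w (a ++ if k then [T] else [])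
  | [] => ⟨[], false, by simp, BEquiv.refl _⟩
  | h :: t => by
    obtain ⟨a, k, hT, he⟩ := removeT t
    have hc : BEquiv (h :: t) (h :: (a ++ if k then [T] else [])) := by
      simpa using he.ctx [h] []
    cases h with
    | L =>
        refine ⟨L :: a, k, by simp [hT], ?_⟩
        simpa using hc
    | R =>
        refine ⟨R :: a, k, by simp [hT], ?_⟩
        simpa using hc
    | T =>
        cases k with
        | false =>
            refine ⟨a.map flipL, true, map_flip_noT hT, ?_⟩
            have := hc.trans (by simpa using passLemma a hT)
            simpa using this
        | true =>
            refine ⟨a.map flipL, false, map_flip_noT hT, ?_⟩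
            have h1 : BEquiv (T :: (a ++ [T])) ((a.map flipL ++ [T]) ++ [T]) := by
              have := (passLemma a hT).ctx [] [T]
              simpa [List.append_assoc] using this
            have h2 : BEquiv ((a.map flipL ++ [T]) ++ [T]) (a.map flipL) := by
              have := BEquiv.base ABase.t2 (a.map flipL) []
              simpa [List.append_assoc] using this
            have := (hc.trans (by simpa using h1)).trans h2
            simpa using this

lemma consAlt : ∀ (c : ALetter), c ≠ T → ∀ (b : Bool) (n : ℕ),
    ∃ (b' : Bool) (n' : ℕ), BEquiv (c :: altWord b n) (altWord b' n') := by
  intro c hc b n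
  cases n with
  | zero =>
      cases c with
      | L => exact ⟨true, 1, BEquiv.refl _⟩
      | R => exact ⟨false, 1, BEquiv.refl _⟩
      | T => exact absurd rfl hc
  | succ m =>
      cases c with
      | T => exact absurd rfl hc
      | L =>
          cases b with
          | true =>
              refine ⟨false, m, ?_⟩
              have := BEquiv.base ABase.cancelL [] (altWord false m)
              simpa [altWord] using this
          | false =>
              exact ⟨true, m + 2, by simp [altWord]; exact BEquiv.refl _⟩
      | R =>
          cases b with
          | false =>
              refine ⟨true, m, ?_⟩
              have := BEquiv.base ABase.cancelR [] (altWord true m)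
              simpa [altWord] using this
          | true =>
              exact ⟨false, m + 2, by simp [altWord]; exact BEquiv.refl _⟩

/-- Reduce a bar-free word to an alternating word. -/
lemma altcat : ∀ w : List ALetter, T ∉ w →
    ∃ (b : Bool) (n : ℕ), BEquiv w (altWord b n)
  | [], _ => ⟨true, 0, BEquiv.refl _⟩
  | h :: t, hT => by
    obtain ⟨b, n, he⟩ := altcat t (fun hm => hT (List.mem_cons_of_mem _ hm))
    have hh : h ≠ T := fun hh => hT (hh ▸ (List.mem_cons_self : h ∈ h :: t))
    obtain ⟨b', n', he'⟩ := consAlt h hh b n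
    have hc : BEquiv (h :: t) (h :: altWord b n) := by simpa using he.ctx [h] []
    exact ⟨b', n', hc.trans he'⟩

lemma noT_alt : ∀ (n : ℕ) (b : Bool), T ∉ altWord b n
  | 0, _ => by simp [altWord]
  | n + 1, b => by
    simp only [altWord, List.mem_cons]
    rintro (h | h)
    · cases b <;> simp_all
    · exact noT_alt n (!b) h

lemma flip_alt : ∀ (n : ℕ) (b : Bool), (altWord b n).map flipL = altWord (!b) n
  | 0, _ => by simp [altWord]
  | n + 1, b => by
    simp only [altWord, List.map_cons, flip_alt n (!b)]
    cases b <;> simp [flipL]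

/-- Every twisted arc word reduces to an alternating arrow word
with no bars, and the two alternating words of the same length (starting with
`L` or with `R`) are equivalent under the moves, so the reduced form is
determined by its length alone: `Λ_i` and `Λ'_i` are identified in the twisted
setting. -/
theorem twisted_arc_reduction :
    (∀ w : List ALetter, ∃ (b : Bool) (n : ℕ), AEquiv w (altWord b n)) ∧
      (∀ n : ℕ, AEquiv (altWord true n) (altWord false n)) := by
  constructor
  · intro w
    obtain ⟨a, k, hT, he⟩ := removeT w
    obtain ⟨b, n, he'⟩ := altcat a hT
    refine ⟨b, n, ?_⟩
    have h1 : AEquiv w (a ++ if k then [T] else []) := bToA he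
    have h2 : AEquiv (a ++ if k then [T] else []) a := by
      cases k with
      | true => exact Relation.EqvGen.rel _ _ (AStep.t0Last a)
      | false => have hr : AEquiv a a := Relation.EqvGen.refl a; simpa using hr
    exact (h1.trans' h2).trans' (bToA he')
  · intro n
    have h1 : AEquiv (T :: altWord true n) (altWord true n) :=
      Relation.EqvGen.rel _ _ (AStep.t0Head _)
    have h2 : BEquiv (T :: altWord true n) (altWord false n ++ [T]) := by
      have := passLemma (altWord true n) (noT_alt n true)
      simpa [flip_alt] using this
    have h3 : AEquiv (altWord false n ++ [T]) (altWord false n) :=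
      Relation.EqvGen.rel _ _ (AStep.t0Last _)
    exact AEquiv.trans' (Relation.EqvGen.symm _ _ h1) ((bToA h2).trans' h3)
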